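/- Let (P,Q) be a negative semistandard notched bitableau and let b be the minimum of all entries of Q. Then P is semistandard on b. -/

import Mathlib

def RowStrictT (P : List (List ℕ)) : Prop :=
  ∀ r ∈ P, List.Chain' (· < ·) r

def PosEntries (P : List (List ℕ)) : Prop := ∀ r ∈ P, ∀ x ∈ r, 0 < x

def IsSSYT (T : List (List ℕ)) : Prop :=
  (∀ r ∈ T, List.Chain' (· < ·) r) ∧
  (∀ i, (T.getD (i + 1) []).length ≤ (T.getD i []).length) ∧
  (∀ i j, j < (T.getD (i + 1) []).length →
    (T.getD i []).getD j 0 ≤ (T.getD (i + 1) []).getD j 0)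

def below (P : List (List ℕ)) (b : ℕ) : List (List ℕ) :=
  P.map (List.filter (fun x => decide (x < b)))

def SemistandardOn (P : List (List ℕ)) (b : ℕ) : Prop := IsSSYT (below P b)

/-- Termwise order on finite multisets on ℕ. -/
noncomputable def twLE (A B : Multiset ℕ) : Prop :=
  Multiset.card A = Multiset.card B ∧
    ∀ i, (A.sort (· ≤ ·)).getD i 0 ≤ (B.sort (· ≤ ·)).getD i 0

/-- `(P,Q)` have the same (notched) shape. -/
def SameShape (P Q : List (List ℕ)) : Prop :=
  P.length = Q.length ∧ ∀ i, (P.getD i []).length = (Q.getD i []).length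

/-- Semistandard notched bitableau: `P_i − Q_i ≤ P_{i+1} − Q_{i+1}` for each
`i`, i.e. `P_i ⊎ Q_{i+1} ≤ P_{i+1} ⊎ Q_i` in the termwise order. -/
noncomputable def SemistandardNB (P Q : List (List ℕ)) : Prop :=
  ∀ i, i + 1 < P.length →
    twLE ((P.getD i [] : Multiset ℕ) + (Q.getD (i + 1) [] : Multiset ℕ))
      ((P.getD (i + 1) [] : Multiset ℕ) + (Q.getD i [] : Multiset ℕ))

/-- Negative bitableau: each entry of `P_i` is strictly less than the
same-position entry of `Q_i`. -/
def NegativeNB (P Q : List (List ℕ)) : Prop :=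
  ∀ i, i < P.length → ∀ j, j < (P.getD i []).length →
    (P.getD i []).getD j 0 < (Q.getD i []).getD j 0


private def pb (b : ℕ) : ℕ → Bool := fun x => decide (x < b)

/-- For a `≤`-sorted list, filtering by `(· < b)` is the same as `takeWhile`. -/
private lemma filter_lt_eq_takeWhile (b : ℕ) :
    ∀ (l : List ℕ), l.Pairwise (· ≤ ·) →
      l.filter (pb b) = l.takeWhile (pb b)
  | [], _ => rfl
  | a :: t, h => by
    rcases List.pairwise_cons.mp h with ⟨ha, ht⟩
    by_cases hab : a < b
    · simp only [List.filter_cons, List.takeWhile_cons, pb, hab, decide_true,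
        if_true, filter_lt_eq_takeWhile b t ht]
    · have : t.filter (pb b) = [] := by
        apply List.filter_eq_nil_iff.mpr
        intro x hx
        simp only [pb, decide_eq_true_eq]
        exact fun hxb => hab (lt_of_le_of_lt (ha x hx) hxb)
      simp [List.filter_cons, List.takeWhile_cons, pb, hab, this]

private lemma filter_lt_prefix {b : ℕ} {l : List ℕ} (h : l.Pairwise (· ≤ ·)) :
    l.filter (pb b) <+: l := by
  rw [filter_lt_eq_takeWhile b l h]; exact List.takeWhile_prefix _

private lemma prefix_getD {l₁ l₂ : List ℕ} (h : l₁ <+: l₂) {j : ℕ} (hj : j < l₁.length) :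
    l₂.getD j 0 = l₁.getD j 0 := by
  obtain ⟨t, rfl⟩ := h
  exact List.getD_append _ _ _ _ hj

private lemma sorted_getD_mono {l : List ℕ} (h : l.Pairwise (· ≤ ·)) {i j : ℕ}
    (hij : i ≤ j) (hj : j < l.length) : l.getD i 0 ≤ l.getD j 0 := by
  have hi : i < l.length := lt_of_le_of_lt hij hj
  rw [List.getD_eq_getElem _ _ hi, List.getD_eq_getElem _ _ hj]
  exact h.rel_get_of_le (a := ⟨i, hi⟩) (b := ⟨j, hj⟩) hij

/-- If `l` is `≤`-sorted, `j < l.length`, and the `j`-th entry is `< b`, then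
`j` is below the length of the `< b` filter. -/
private lemma lt_filter_length {b : ℕ} {l : List ℕ} (h : l.Pairwise (· ≤ ·)) {j : ℕ}
    (hj : j < l.length) (hlt : l.getD j 0 < b) :
    j < (l.filter (pb b)).length := by
  rw [filter_lt_eq_takeWhile b l h]
  by_contra hk
  push_neg at hk
  set k := (l.takeWhile (pb b)).length with hkdef
  have hkj : k ≤ j := hk
  have hne : l.dropWhile (pb b) ≠ [] := by
    intro hnil
    have := List.takeWhile_append_dropWhile (p := pb b) (l := l)
    rw [hnil, List.append_nil] at this
    have : l.length = k := by rw [← this]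
    omega
  have hhead : pb b ((l.dropWhile (pb b)).head hne) = false :=
    List.head_dropWhile_not (pb b) (l := l) hne
  have hdecomp : l.takeWhile (pb b) ++ l.dropWhile (pb b) = l :=
    List.takeWhile_append_dropWhile (p := pb b) (l := l)
  have hgetk : l.getD k 0 = (l.dropWhile (pb b)).head hne := by
    conv_lhs => rw [← hdecomp]
    rw [List.getD_append_right _ _ _ _ (le_refl _)]
    simp only [Nat.sub_self]
    rw [List.getD_eq_getElem _ _ (by
      have := List.length_pos_iff.mpr hne; omega)]
    exact (List.getElem_zero _).symm ▸ (List.head_eq_getElem hne) ▸ rfl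
  have hbk : ¬ l.getD k 0 < b := by
    rw [hgetk]; simpa [pb] using hhead
  exact hbk (lt_of_le_of_lt (sorted_getD_mono h hkj hj) hlt)

/-- The `< b` part of the sorted merge of `Pl` and `Ql` is exactly the
`< b` part of `Pl`, when all entries of `Ql` are `≥ b`. -/
private lemma sort_filter_eq (b : ℕ) (Pl Ql : List ℕ) (hP : Pl.Pairwise (· ≤ ·))
    (hQ : ∀ x ∈ Ql, b ≤ x) :
    (Multiset.sort ((Pl : Multiset ℕ) + (Ql : Multiset ℕ)) (· ≤ ·)).filter (pb b)
      = Pl.filter (pb b) := by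
  apply fun hp h1 h2 => List.Perm.eq_of_pairwise' (r := (· ≤ · : ℕ → ℕ → Prop)) h1 h2 hp
  · apply Multiset.coe_eq_coe.mp
    have h1 : ((Multiset.sort ((Pl : Multiset ℕ) + (Ql : Multiset ℕ)) (· ≤ ·)).filter (pb b)
        : Multiset ℕ) = Multiset.filter (fun x => x < b) ((Pl : Multiset ℕ) + (Ql : Multiset ℕ)) := by
      rw [← Multiset.sort_eq ((Pl : Multiset ℕ) + (Ql : Multiset ℕ)) (· ≤ ·), Multiset.filter_coe]
      rw [Multiset.sort_eq]
      rfl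
    rw [h1, Multiset.filter_add, Multiset.filter_coe, Multiset.filter_coe]
    have h2 : Ql.filter (fun x => decide (x < b)) = [] := by
      apply List.filter_eq_nil_iff.mpr
      intro x hx
      simpa using not_lt.mpr (hQ x hx)
    rw [h2]
    simp only [Multiset.coe_nil, add_zero]
    rfl
  · exact (Multiset.pairwise_sort _ _).filter _
  · exact hP.filter _

/-- The key combinatorial step: comparing two rows through the termwise order
on the merged multisets. -/
private lemma key_step {b : ℕ} {Pi Qi Pi1 Qi1 : List ℕ}
    (hPi : Pi.Pairwise (· ≤ ·)) (hPi1 : Pi1.Pairwise (· ≤ ·))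
    (hQi : ∀ x ∈ Qi, b ≤ x) (hQi1 : ∀ x ∈ Qi1, b ≤ x)
    (htw : twLE ((Pi : Multiset ℕ) + (Qi1 : Multiset ℕ))
      ((Pi1 : Multiset ℕ) + (Qi : Multiset ℕ))) :
    (Pi1.filter (pb b)).length ≤ (Pi.filter (pb b)).length ∧
    ∀ j, j < (Pi1.filter (pb b)).length →
      (Pi.filter (pb b)).getD j 0 ≤ (Pi1.filter (pb b)).getD j 0 := by
  set a := Multiset.sort ((Pi : Multiset ℕ) + (Qi1 : Multiset ℕ)) (· ≤ ·) with hadef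
  set c := Multiset.sort ((Pi1 : Multiset ℕ) + (Qi : Multiset ℕ)) (· ≤ ·) with hcdef
  have hasort : a.Pairwise (· ≤ ·) := Multiset.pairwise_sort _ _
  have hcsort : c.Pairwise (· ≤ ·) := Multiset.pairwise_sort _ _
  have hafilt : a.filter (pb b) = Pi.filter (pb b) := sort_filter_eq b Pi Qi1 hPi hQi1
  have hcfilt : c.filter (pb b) = Pi1.filter (pb b) := sort_filter_eq b Pi1 Qi hPi1 hQi
  have hapre : Pi.filter (pb b) <+: a := hafilt ▸ filter_lt_prefix hasort
  have hcpre : Pi1.filter (pb b) <+: c := hcfilt ▸ filter_lt_prefix hcsort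
  have hlen : a.length = c.length := by
    rw [hadef, hcdef, Multiset.length_sort, Multiset.length_sort, htw.1]
  have main : ∀ j, j < (Pi1.filter (pb b)).length →
      j < (Pi.filter (pb b)).length ∧
      (Pi.filter (pb b)).getD j 0 ≤ (Pi1.filter (pb b)).getD j 0 := by
    intro j hj
    have hcj : c.getD j 0 = (Pi1.filter (pb b)).getD j 0 := prefix_getD hcpre hj
    have hcjb : c.getD j 0 < b := by
      rw [hcj, List.getD_eq_getElem _ _ hj]
      have hmem := List.getElem_mem (l := Pi1.filter (pb b)) (n := j) hj
      have := List.of_mem_filter hmem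
      simpa [pb] using this
    have haj_le : a.getD j 0 ≤ c.getD j 0 := htw.2 j
    have hja : j < a.length := by
      rw [hlen]; exact lt_of_lt_of_le hj hcpre.length_le
    have hjA : j < (Pi.filter (pb b)).length := by
      rw [← hafilt]
      exact lt_filter_length hasort hja (lt_of_le_of_lt haj_le hcjb)
    have haj : a.getD j 0 = (Pi.filter (pb b)).getD j 0 := prefix_getD hapre hjA
    exact ⟨hjA, by rw [← haj, ← hcj]; exact haj_le⟩
  constructor
  · rcases Nat.eq_zero_or_pos (Pi1.filter (pb b)).length with h0 | h0
    · omega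
    · have := (main ((Pi1.filter (pb b)).length - 1) (by omega)).1
      omega
  · exact fun j hj => (main j hj).2

private lemma below_getD (P : List (List ℕ)) (b i : ℕ) :
    (below P b).getD i [] = (P.getD i []).filter (pb b) := by
  by_cases h : i < P.length
  · rw [List.getD_eq_getElem _ _ (by simpa [below] using h), List.getD_eq_getElem _ _ h]
    simp only [below, List.getElem_map]
    rfl
  · rw [List.getD_eq_default _ _ (by simpa [below] using not_lt.mp h),
      List.getD_eq_default _ _ (not_lt.mp h)]
    rfl

/-- If `(P,Q)` is a negative semistandard notched bitableau and `b` is the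
minimum of all entries of `Q`, then `P` is semistandard on `b`. -/
theorem semistandardOn_min_of_negative_ssnb (P Q : List (List ℕ))
    (hshape : SameShape P Q) (hrsP : RowStrictT P) (hrsQ : RowStrictT Q)
    (hposP : PosEntries P) (hposQ : PosEntries Q)
    (hss : SemistandardNB P Q) (hneg : NegativeNB P Q)
    (b : ℕ) (hbmem : ∃ r ∈ Q, b ∈ r) (hbmin : ∀ r ∈ Q, ∀ x ∈ r, b ≤ x) :
    SemistandardOn P b := by
  have hPsorted : ∀ i, (P.getD i []).Pairwise (· ≤ ·) := by
    intro i
    by_cases h : i < P.length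
    · have hmem : P.getD i [] ∈ P := by
        rw [List.getD_eq_getElem _ _ h]; exact List.getElem_mem h
      exact (List.isChain_iff_pairwise.mp (hrsP _ hmem)).imp le_of_lt
    · rw [List.getD_eq_default _ _ (not_lt.mp h)]; exact List.Pairwise.nil
  have hQge : ∀ i, ∀ x ∈ Q.getD i [], b ≤ x := by
    intro i x hx
    by_cases h : i < Q.length
    · have hmem : Q.getD i [] ∈ Q := by
        rw [List.getD_eq_getElem _ _ h]; exact List.getElem_mem h
      exact hbmin _ hmem x hx
    · rw [List.getD_eq_default _ _ (not_lt.mp h)] at hx; simp at hx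
  have hkey : ∀ i, i + 1 < P.length →
      ((P.getD (i+1) []).filter (pb b)).length ≤ ((P.getD i []).filter (pb b)).length ∧
      ∀ j, j < ((P.getD (i+1) []).filter (pb b)).length →
        ((P.getD i []).filter (pb b)).getD j 0 ≤ ((P.getD (i+1) []).filter (pb b)).getD j 0 :=
    fun i hi => key_step (hPsorted i) (hPsorted (i+1)) (hQge i) (hQge (i+1)) (hss i hi)
  refine ⟨?_, ?_, ?_⟩
  · intro r hr
    rw [below] at hr
    obtain ⟨s, hs, rfl⟩ := List.mem_map.mp hr
    exact List.isChain_iff_pairwise.mpr ((List.isChain_iff_pairwise.mp (hrsP s hs)).filter _)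
  · intro i
    rw [below_getD, below_getD]
    by_cases h : i + 1 < P.length
    · exact (hkey i h).1
    · rw [List.getD_eq_default _ _ (by omega : P.length ≤ i + 1)]
      simp
  · intro i j hj
    rw [below_getD, below_getD] at *
    by_cases h : i + 1 < P.length
    · exact (hkey i h).2 j hj
    · rw [List.getD_eq_default _ _ (by omega : P.length ≤ i + 1)] at hj
      simp at hj
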